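/- Let f : ℝ^d → ℝ be μ-strongly convex with L-Lipschitz gradient, μ > 0, κ = L/μ, and minimizer x*. Fix γ ∈ [0, 1 - 1/κ), set α = 1/L, r = √((1-γ)/κ), c = (1-γ-r)/((1-γ)r), β = (1-γ-r)²/((1-γ)(1-γ-r²)). Run EMA-Nesterov with gradient-descent base step and constant β_t = β, and define the Lyapunov function E_t = f(x^t) - f(x*) + (μ/2)‖x^t + c·m^t - x*‖². Then for every t ≥ 0, E_{t+1} ≤ (1 - r) E_t. -/

import Mathlib

open InnerProductSpace Set

local notation "⟪" x ", " y "⟫" => @inner ℝ _ _ x y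

variable {E : Type*} [NormedAddCommGroup E] [InnerProductSpace ℝ E] [CompleteSpace E]

lemma aux_line_hasDerivAt (f : E → ℝ) (hdiff : Differentiable ℝ f) (p v : E) (t : ℝ) :
    HasDerivAt (fun s : ℝ => f (p + s • v)) ⟪gradient f (p + t • v), v⟫ t := by
  have h1 : HasDerivAt (fun s : ℝ => p + s • v) v t := by
    simpa using ((hasDerivAt_id t).smul_const v).const_add p
  have h2 : HasFDerivAt f (toDual ℝ E (gradient f (p + t • v))) (p + t • v) :=
    (hdiff _).hasGradientAt.hasFDerivAt
  have := h2.comp_hasDerivAt t h1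
  simpa [InnerProductSpace.toDual_apply_apply, Function.comp_def] using this

omit [CompleteSpace E] in
lemma aux_norm_line (p v : E) (t : ℝ) :
    ‖p + t • v‖ ^ 2 = ‖v‖ ^ 2 * t ^ 2 + 2 * ⟪p, v⟫ * t + ‖p‖ ^ 2 := by
  rw [norm_add_sq_real, real_inner_smul_right, norm_smul]
  simp [mul_pow, sq_abs]
  ring

lemma aux_strong_convex (f : E → ℝ) (μ : ℝ) (hdiff : Differentiable ℝ f)
    (hsc : ConvexOn ℝ univ fun z => f z - μ / 2 * ‖z‖ ^ 2) (p q : E) :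
    f p + ⟪gradient f p, q - p⟫ + μ / 2 * ‖q - p‖ ^ 2 ≤ f q := by
  have hconv : ConvexOn ℝ univ
      (fun t : ℝ => f (p + t • (q - p)) - μ / 2 * ‖p + t • (q - p)‖ ^ 2) := by
    have h := hsc.comp_affineMap (AffineMap.lineMap p q : ℝ →ᵃ[ℝ] E)
    have he : ((fun z => f z - μ / 2 * ‖z‖ ^ 2) ∘ (AffineMap.lineMap p q : ℝ →ᵃ[ℝ] E))
        = fun t : ℝ => f (p + t • (q - p)) - μ / 2 * ‖p + t • (q - p)‖ ^ 2 := by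
      funext t
      have : (AffineMap.lineMap p q : ℝ →ᵃ[ℝ] E) t = p + t • (q - p) := by
        rw [AffineMap.lineMap_apply]
        simp [vsub_eq_sub, vadd_eq_add]
        abel
      simp [Function.comp, this]
    rw [he] at h
    simpa using h
  have hd1 : HasDerivAt (fun t : ℝ => f (p + t • (q - p))) ⟪gradient f p, q - p⟫ 0 := by
    have := aux_line_hasDerivAt f hdiff p (q - p) 0
    simpa using this
  have hd2 : HasDerivAt (fun t : ℝ => μ / 2 * ‖p + t • (q - p)‖ ^ 2)
      (μ / 2 * (2 * ⟪p, q - p⟫)) 0 := by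
    have hpoly : HasDerivAt
        (fun t : ℝ => ‖q - p‖ ^ 2 * t ^ 2 + 2 * ⟪p, q - p⟫ * t + ‖p‖ ^ 2)
        (2 * ⟪p, q - p⟫) 0 := by
      have h1 : HasDerivAt (fun t : ℝ => t ^ 2) (0 : ℝ) 0 := by
        simpa using hasDerivAt_pow 2 (0 : ℝ)
      have := ((h1.const_mul (‖q - p‖ ^ 2)).add (((hasDerivAt_id (0:ℝ)).const_mul
        (2 * ⟪p, q - p⟫)).add_const (‖p‖ ^ 2)))
      exact (this.congr_deriv (by ring)).congr_of_eventuallyEq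
        (Filter.Eventually.of_forall fun x => by simp only [Pi.add_apply, id_eq]; ring)
    have he2 : (fun t : ℝ => μ / 2 * ‖p + t • (q - p)‖ ^ 2)
        = fun t : ℝ => μ / 2 * (‖q - p‖ ^ 2 * t ^ 2 + 2 * ⟪p, q - p⟫ * t + ‖p‖ ^ 2) := by
      funext t; rw [aux_norm_line]
    rw [he2]
    exact hpoly.const_mul (μ / 2)
  have hφ := hd1.sub hd2
  have hslope := hconv.le_slope_of_hasDerivAt (mem_univ (0:ℝ)) (mem_univ (1:ℝ)) one_pos hφ
  rw [slope_def_field] at hslope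
  simp only [one_smul, zero_smul, add_zero, add_sub_cancel] at hslope
  have hexp : ‖q - p‖ ^ 2 = ‖q‖ ^ 2 - 2 * ⟪p, q⟫ + ‖p‖ ^ 2 := by
    rw [norm_sub_sq_real, real_inner_comm]
  have hip : ⟪p, q - p⟫ = ⟪p, q⟫ - ‖p‖ ^ 2 := by
    rw [inner_sub_right, real_inner_self_eq_norm_sq]
  have h3 : ⟪gradient f p, q - p⟫ - μ / 2 * (2 * ⟪p, q - p⟫) ≤
      (f q - μ / 2 * ‖q‖ ^ 2 - (f p - μ / 2 * ‖p‖ ^ 2)) / (1 - 0) := hslope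
  rw [show ((1:ℝ) - 0) = 1 by norm_num, div_one] at h3
  have hexp2 : μ / 2 * ‖q - p‖ ^ 2 = μ / 2 * (‖q‖ ^ 2 - 2 * ⟪p, q⟫ + ‖p‖ ^ 2) := by rw [hexp]
  have hip2 : μ / 2 * (2 * ⟪p, q - p⟫) = μ / 2 * (2 * (⟪p, q⟫ - ‖p‖ ^ 2)) := by rw [hip]
  linarith [h3, hexp2, hip2]

lemma aux_descent (f : E → ℝ) (L : ℝ) (hL : 0 ≤ L) (hdiff : Differentiable ℝ f)
    (hlip : ∀ z w, ‖gradient f z - gradient f w‖ ≤ L * ‖z - w‖) (p q : E) :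
    f q ≤ f p + ⟪gradient f p, q - p⟫ + L / 2 * ‖q - p‖ ^ 2 := by
  have hgc : Continuous (gradient f) := by
    have hlw : LipschitzWith (Real.toNNReal L) (gradient f) := by
      apply LipschitzWith.of_dist_le_mul
      intro a b
      rw [dist_eq_norm, dist_eq_norm]
      calc ‖gradient f a - gradient f b‖ ≤ L * ‖a - b‖ := hlip a b
        _ = Real.toNNReal L * ‖a - b‖ := by rw [Real.coe_toNNReal L hL]
    exact hlw.continuous
  have hcont : Continuous (fun t : ℝ => ⟪gradient f (p + t • (q - p)), q - p⟫) := by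
    apply Continuous.inner
    · exact hgc.comp (by continuity)
    · exact continuous_const
  have hder : ∀ t ∈ uIcc (0:ℝ) 1, HasDerivAt (fun s : ℝ => f (p + s • (q - p)))
      (⟪gradient f (p + t • (q - p)), q - p⟫) t :=
    fun t _ => aux_line_hasDerivAt f hdiff p (q - p) t
  have hint : IntervalIntegrable (fun t : ℝ => ⟪gradient f (p + t • (q - p)), q - p⟫)
      MeasureTheory.volume 0 1 := hcont.intervalIntegrable 0 1
  have hftc := intervalIntegral.integral_eq_sub_of_hasDerivAt hder hint
  have hint2 : IntervalIntegrable
      (fun t : ℝ => ⟪gradient f p, q - p⟫ + L * ‖q - p‖ ^ 2 * t)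
      MeasureTheory.volume 0 1 := (Continuous.intervalIntegrable (by continuity) 0 1)
  have hmono : (∫ t in (0:ℝ)..1, ⟪gradient f (p + t • (q - p)), q - p⟫) ≤
      ∫ t in (0:ℝ)..1, (⟪gradient f p, q - p⟫ + L * ‖q - p‖ ^ 2 * t) := by
    apply intervalIntegral.integral_mono_on (by norm_num) hint hint2
    intro t ht
    have h1 : ⟪gradient f (p + t • (q - p)), q - p⟫ - ⟪gradient f p, q - p⟫
        = ⟪gradient f (p + t • (q - p)) - gradient f p, q - p⟫ := (inner_sub_left _ _ _).symm
    have h2 : ⟪gradient f (p + t • (q - p)) - gradient f p, q - p⟫ ≤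
        ‖gradient f (p + t • (q - p)) - gradient f p‖ * ‖q - p‖ := real_inner_le_norm _ _
    have h3 : ‖gradient f (p + t • (q - p)) - gradient f p‖ ≤ L * ‖t • (q - p)‖ := by
      have := hlip (p + t • (q - p)) p; simpa using this
    have h4 : ‖t • (q - p)‖ = t * ‖q - p‖ := by
      rw [norm_smul, Real.norm_eq_abs, abs_of_nonneg ht.1]
    have h5 := mul_le_mul_of_nonneg_right h3 (norm_nonneg (q - p))
    rw [h4] at h5
    linarith [h1, h2, h5]
  have hval : (∫ t in (0:ℝ)..1, (⟪gradient f p, q - p⟫ + L * ‖q - p‖ ^ 2 * t))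
      = ⟪gradient f p, q - p⟫ + L * ‖q - p‖ ^ 2 / 2 := by
    rw [intervalIntegral.integral_add (intervalIntegrable_const)
      ((Continuous.intervalIntegrable (by continuity) 0 1)),
      intervalIntegral.integral_const, intervalIntegral.integral_const_mul,
      integral_id]
    norm_num [mul_one_div]
  have hend : (∫ t in (0:ℝ)..1, ⟪gradient f (p + t • (q - p)), q - p⟫) = f q - f p := by
    rw [hftc]; norm_num
  rw [hend, hval] at hmono
  linarith [hmono]

omit [CompleteSpace E] in
lemma aux_norm_comb (a b : ℝ) (u w : E) :
    ‖a • u + b • w‖ ^ 2 = a ^ 2 * ‖u‖ ^ 2 + 2 * (a * b) * ⟪u, w⟫ + b ^ 2 * ‖w‖ ^ 2 := by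
  rw [norm_add_sq_real, real_inner_smul_left, real_inner_smul_right, norm_smul, norm_smul,
    Real.norm_eq_abs, Real.norm_eq_abs, mul_pow, mul_pow, sq_abs, sq_abs]
  ring

set_option maxHeartbeats 1000000 in
/-- one-step Lyapunov decrease `E_{t+1} ≤ (1-r) E_t` for EMA-Nesterov with
gradient-descent base step on a `μ`-strongly convex, `L`-smooth objective. -/
theorem ema_nesterov_lyapunov_decrease_strongly_convex
    (d : ℕ) (f : EuclideanSpace ℝ (Fin d) → ℝ)
    (μ L : ℝ) (hμ : 0 < μ) (hL : μ < L)
    (hdiff : Differentiable ℝ f)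
    (hsc : ConvexOn ℝ Set.univ fun z => f z - μ / 2 * ‖z‖ ^ 2)
    (hlip : ∀ z w, ‖gradient f z - gradient f w‖ ≤ L * ‖z - w‖)
    (xstar : EuclideanSpace ℝ (Fin d)) (hmin : ∀ z, f xstar ≤ f z)
    (γ : ℝ) (hγ0 : 0 ≤ γ) (hγ1 : γ < 1 - 1 / (L / μ))
    (α r c β : ℝ)
    (hα : α = 1 / L)
    (hr : r = Real.sqrt ((1 - γ) / (L / μ)))
    (hc : c = (1 - γ - r) / ((1 - γ) * r))
    (hβ : β = (1 - γ - r) ^ 2 / ((1 - γ) * (1 - γ - r ^ 2)))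
    (x m : ℕ → EuclideanSpace ℝ (Fin d))
    (hm0 : m 0 = 0)
    (hx : ∀ t, x (t + 1) = (x t + β • m t) - α • gradient f (x t + β • m t))
    (hm : ∀ t, m (t + 1) = γ • m t + (1 - γ) • (x (t + 1) - x t)) :
    ∀ t : ℕ,
      f (x (t + 1)) - f xstar + μ / 2 * ‖x (t + 1) + c • m (t + 1) - xstar‖ ^ 2 ≤
        (1 - r) * (f (x t) - f xstar + μ / 2 * ‖x t + c • m t - xstar‖ ^ 2) := by
  subst hα
  -- basic scalar facts
  have hL0 : 0 < L := lt_trans hμ hL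
  have hκ1 : 1 < L / μ := (one_lt_div hμ).2 hL
  have hκinv : 0 < 1 / (L / μ) := by positivity
  have hs0 : 0 < 1 - γ := by linarith only [hγ1, hκinv]
  have hinvk : 1 / (L / μ) < 1 - γ := by linarith [hγ1]
  have hinvk' : μ / L < 1 - γ := by rwa [one_div_div] at hinvk
  have hμL : μ < (1 - γ) * L := by
    have h := (div_lt_iff₀ hL0).mp hinvk'
    linarith only [h]
  have hr0 : 0 < r := by
    rw [hr]; apply Real.sqrt_pos.2; positivity
  have hr2 : r ^ 2 = (1 - γ) / (L / μ) := by
    rw [hr, sq, Real.mul_self_sqrt (by positivity)]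
  have hLr : L * r ^ 2 = (1 - γ) * μ := by
    rw [hr2]; field_simp
  have hrs : r < 1 - γ := by
    apply lt_of_pow_lt_pow_left₀ 2 hs0.le
    nlinarith only [hLr, hμL, hr0, hL0, hs0]
  have hr1 : r < 1 := by linarith only [hrs, hγ0]
  have hsr2pos : 0 < 1 - γ - r ^ 2 := by nlinarith only [hLr, hL, hs0, hL0]
  have hsr : 0 < 1 - γ - r := by linarith
  have hrne : r ≠ 0 := ne_of_gt hr0
  have hsne : (1 : ℝ) - γ ≠ 0 := ne_of_gt hs0
  have hs2ne : (1 : ℝ) - γ - r ^ 2 ≠ 0 := ne_of_gt hsr2pos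
  have hLne : L ≠ 0 := ne_of_gt hL0
  have hμne : μ ≠ 0 := ne_of_gt hμ
  have hLval : L = (1 - γ) * μ / r ^ 2 := by
    rw [eq_div_iff (pow_ne_zero 2 hrne)]; linarith only [hLr]
  intro t
  have hxt := hx t
  have hmt := hm t
  set y := x t + β • m t with hy
  set g := gradient f y with hgdef
  -- the key vector identity
  have hvec : x (t + 1) + c • m (t + 1) - xstar
      = (1 - r) • (x t + c • m t - xstar) + r • ((y - xstar) - μ⁻¹ • g) := by
    rw [hmt, hxt, hy]
    match_scalars
    · ring
    · rw [hc, hβ]; field_simp; ring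
    · rw [hc, hLval]; field_simp; ring
    · ring
  -- norm expansions
  have hcomb : ‖(1 - r) • (x t + c • m t - xstar) + r • ((y - xstar) - μ⁻¹ • g)‖ ^ 2
      = (1 - r) * ‖x t + c • m t - xstar‖ ^ 2 + r * ‖(y - xstar) - μ⁻¹ • g‖ ^ 2
        - r * (1 - r) * ‖(x t + c • m t - xstar) - ((y - xstar) - μ⁻¹ • g)‖ ^ 2 := by
    linear_combination aux_norm_comb (1 - r) r (x t + c • m t - xstar) ((y - xstar) - μ⁻¹ • g)
      + (r * (1 - r)) * norm_sub_sq_real (x t + c • m t - xstar) ((y - xstar) - μ⁻¹ • g)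
  have hww : ‖(y - xstar) - μ⁻¹ • g‖ ^ 2
      = ‖y - xstar‖ ^ 2 - 2 * μ⁻¹ * ⟪g, y - xstar⟫ + μ⁻¹ ^ 2 * ‖g‖ ^ 2 := by
    rw [norm_sub_sq_real, real_inner_smul_right, norm_smul, Real.norm_eq_abs, mul_pow, sq_abs,
      real_inner_comm (y - xstar) g]
    ring
  have huw : (x t + c • m t - xstar) - ((y - xstar) - μ⁻¹ • g)
      = (c - β) • m t + μ⁻¹ • g := by
    rw [hy]; module
  have hd2 : ‖(x t + c • m t - xstar) - ((y - xstar) - μ⁻¹ • g)‖ ^ 2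
      = (c - β) ^ 2 * ‖m t‖ ^ 2 + 2 * ((c - β) * μ⁻¹) * ⟪g, m t⟫ + μ⁻¹ ^ 2 * ‖g‖ ^ 2 := by
    rw [huw, aux_norm_comb, real_inner_comm (m t) g]
  -- descent step
  have hA : f (x (t + 1)) ≤ f y - 1 / (2 * L) * ‖g‖ ^ 2 := by
    have h0 := aux_descent f L hL0.le hdiff hlip y (x (t + 1))
    rw [← hgdef] at h0
    have harg : x (t + 1) - y = -(1 / L) • g := by rw [hxt]; module
    rw [harg, real_inner_smul_right, norm_smul, Real.norm_eq_abs, mul_pow, sq_abs,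
      real_inner_self_eq_norm_sq] at h0
    have hval : -(1 / L) * ‖g‖ ^ 2 + L / 2 * ((-(1 / L)) ^ 2 * ‖g‖ ^ 2)
        = -(1 / (2 * L)) * ‖g‖ ^ 2 := by
      field_simp; ring
    linarith only [h0, hval]
  -- strong convexity at xstar
  have hB : f y + -⟪g, y - xstar⟫ + μ / 2 * ‖y - xstar‖ ^ 2 ≤ f xstar := by
    have h0 := aux_strong_convex f μ hdiff hsc y xstar
    rw [← hgdef] at h0
    rw [show xstar - y = -(y - xstar) from (neg_sub y xstar).symm, inner_neg_right,
      norm_neg] at h0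
    linarith only [h0]
  -- strong convexity at x t
  have hC : f y + -β * ⟪g, m t⟫ + μ / 2 * ((-β) ^ 2 * ‖m t‖ ^ 2) ≤ f (x t) := by
    have h0 := aux_strong_convex f μ hdiff hsc y (x t)
    rw [← hgdef] at h0
    have e1 : x t - y = -β • m t := by rw [hy]; module
    rw [e1, real_inner_smul_right, norm_smul, Real.norm_eq_abs, mul_pow, sq_abs] at h0
    linarith only [h0]
  have hB2 := mul_le_mul_of_nonneg_left hB hr0.le
  have hC2 := mul_le_mul_of_nonneg_left hC (show (0:ℝ) ≤ 1 - r by linarith)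
  -- Cauchy-Schwarz
  have hCS : -(‖g‖ * ‖m t‖) ≤ ⟪g, m t⟫ := by
    have h := abs_real_inner_le_norm g (m t)
    linarith only [neg_abs_le (⟪g, m t⟫ : ℝ), h]
  -- quadratic form bound
  set A0 : ℝ := (1 - r) * γ * r * (1 - γ - r) / ((1 - γ) * (1 - γ - r ^ 2)) with hA0def
  set P1 : ℝ := γ / (2 * L) with hP1def
  set QQ : ℝ := μ * (1 - r) / 2 * (β ^ 2 + r * (c - β) ^ 2) with hQQdef
  have hA0 : 0 ≤ A0 := by
    rw [hA0def]
    apply div_nonneg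
    · apply mul_nonneg (mul_nonneg (mul_nonneg (by linarith) hγ0) hr0.le) (by linarith)
    · apply mul_nonneg hs0.le hsr2pos.le
  have hQQ0 : 0 ≤ QQ := by
    rw [hQQdef]
    apply mul_nonneg
    · apply div_nonneg (mul_nonneg hμ.le (by linarith)) (by norm_num)
    · exact add_nonneg (sq_nonneg β) (mul_nonneg hr0.le (sq_nonneg (c - β)))
  have hdisc : A0 ^ 2 ≤ 4 * P1 * QQ := by
    have key : 4 * P1 * QQ - A0 ^ 2
        = γ * (1 - r) * r * (1 - γ - r) ^ 3 / ((1 - γ - r ^ 2) * (1 - γ) ^ 3) := by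
      rw [hP1def, hQQdef, hA0def, hc, hβ, hLval]
      field_simp
      ring
    have hrhs : 0 ≤ γ * (1 - r) * r * (1 - γ - r) ^ 3 / ((1 - γ - r ^ 2) * (1 - γ) ^ 3) := by
      apply div_nonneg
      · exact mul_nonneg (mul_nonneg (mul_nonneg hγ0 (by linarith)) hr0.le)
          (pow_nonneg hsr.le 3)
      · exact mul_nonneg hsr2pos.le (pow_nonneg hs0.le 3)
    linarith only [key, hrhs]
  have hQuadCore : A0 * (‖g‖ * ‖m t‖) ≤ P1 * ‖g‖ ^ 2 + QQ * ‖m t‖ ^ 2 := by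
    rcases eq_or_lt_of_le hγ0 with h0 | h0
    · have hA0z : A0 = 0 := by rw [hA0def, ← h0]; ring
      have hP1z : P1 = 0 := by rw [hP1def, ← h0]; ring
      rw [hA0z, hP1z]
      simpa using mul_nonneg hQQ0 (sq_nonneg ‖m t‖)
    · have hP1pos : 0 < P1 := by rw [hP1def]; exact div_pos h0 (by linarith)
      nlinarith only [sq_nonneg (2 * P1 * ‖g‖ - A0 * ‖m t‖),
        mul_le_mul_of_nonneg_right hdisc (sq_nonneg ‖m t‖), hP1pos,
        mul_nonneg (norm_nonneg g) (norm_nonneg (m t)), hA0, hQQ0]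
  have hQuadFinal : (r ^ 2 / (2 * μ) - 1 / (2 * L)) * ‖g‖ ^ 2
      + ((1 - r) * β - r * (1 - r) * (c - β)) * ⟪g, m t⟫
      - (μ * (1 - r) / 2 * β ^ 2 + μ * r * (1 - r) / 2 * (c - β) ^ 2) * ‖m t‖ ^ 2 ≤ 0 := by
    have h1 : r ^ 2 / (2 * μ) - 1 / (2 * L) = -P1 := by
      rw [hP1def, hLval]; field_simp; ring
    have h2 : (1 - r) * β - r * (1 - r) * (c - β) = -A0 := by
      rw [hA0def, hc, hβ]; field_simp; ring
    have h3 : μ * (1 - r) / 2 * β ^ 2 + μ * r * (1 - r) / 2 * (c - β) ^ 2 = QQ := by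
      rw [hQQdef]; ring
    rw [h1, h2, h3]
    have h4 : -(A0 * ⟪g, m t⟫) ≤ A0 * (‖g‖ * ‖m t‖) := by nlinarith only [hCS, hA0]
    linarith only [hQuadCore, h4]
  -- final assembly
  have hnormexp : μ / 2 * ‖(1 - r) • (x t + c • m t - xstar) + r • ((y - xstar) - μ⁻¹ • g)‖ ^ 2
      = μ / 2 * (1 - r) * ‖x t + c • m t - xstar‖ ^ 2
        + μ / 2 * r * ‖y - xstar‖ ^ 2 - r * ⟪g, y - xstar⟫ + r ^ 2 / (2 * μ) * ‖g‖ ^ 2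
        - μ / 2 * r * (1 - r) * (c - β) ^ 2 * ‖m t‖ ^ 2
        - r * (1 - r) * (c - β) * ⟪g, m t⟫ := by
    rw [hcomb, hww, hd2]
    have hμinv : μ * μ⁻¹ = 1 := mul_inv_cancel₀ hμne
    linear_combination (-(r * ⟪g, y - xstar⟫) + r ^ 2 * μ⁻¹ * ‖g‖ ^ 2 / 2
      - r * (1 - r) * (c - β) * ⟪g, m t⟫) * hμinv
  rw [hvec, hnormexp]
  linarith only [hA, hB2, hC2, hQuadFinal]
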